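/- For every natural number N there exists a natural number M such that for every Hausdorff topological space X with at least M elements and every finite tree T with at most N elements, there exists a continuous surjection from X onto T, where T carries the topology whose open sets are exactly the upward-closed subsets. -/

import Mathlib

universe u v

/-- The topology on a preorder whose open sets are exactly the upward-closed subsets. -/
def upperTop (T : Type*) [Preorder T] : TopologicalSpace T where
  IsOpen s := IsUpperSet s
  isOpen_univ := isUpperSet_univ
  isOpen_inter := fun _ _ hs ht => hs.inter ht
  isOpen_sUnion := fun _ h => isUpperSet_sUnion h

/-- For every `N` there is `M` such that every Hausdorff space with at least `M` elements
admits a continuous surjection onto every finite tree with at most `N` elements (a finite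
partial order with a least element in which the set of predecessors of any element is
linearly ordered, topologized by upward-closed sets). -/
theorem stmt11 (N : ℕ) :
    ∃ M : ℕ, ∀ (X : Type u) [TopologicalSpace X] [T2Space X],
      Nonempty (Fin M ↪ X) →
      ∀ (T : Type v) [PartialOrder T] [OrderBot T] [Fintype T],
        (∀ t a b : T, a ≤ t → b ≤ t → a ≤ b ∨ b ≤ a) →
        Fintype.card T ≤ N →
        ∃ f : X → T, @Continuous X T _ (upperTop T) f ∧ Function.Surjective f := by
  classical
  refine ⟨N, ?_⟩
  intro X _ _ ⟨e⟩ T _ _ _ htree hcard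
  -- embed T into X
  let g : T ↪ X := ((Fintype.equivFin T).toEmbedding.trans (Fin.castLEEmb hcard)).trans e
  -- pairwise disjoint open neighborhoods of the points g t
  obtain ⟨U, hU, hUd⟩ := (Set.finite_range g).t2_separation
  set V : T → Set X := fun t => U (g t) with hV
  have hVopen : ∀ t, IsOpen (V t) := fun t => (hU (g t)).2
  have hVmem : ∀ t, g t ∈ V t := fun t => (hU (g t)).1
  have hVdisj : ∀ {s t : T}, s ≠ t → Disjoint (V s) (V t) := by
    intro s t hst
    exact hUd (Set.mem_range_self s) (Set.mem_range_self t) (fun h => hst (g.injective h))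
  -- W t : union of V s over s ≥ t
  set W : T → Set X := fun t => ⋃ s ∈ {s : T | t ≤ s}, V s with hWdef
  have hWopen : ∀ t, IsOpen (W t) := fun t =>
    isOpen_biUnion fun s _ => hVopen s
  have hWmem : ∀ x t, x ∈ W t ↔ ∃ s, t ≤ s ∧ x ∈ V s := by
    intro x t
    simp [hWdef, Set.mem_iUnion]
  have hgW : ∀ s t : T, g s ∈ W t ↔ t ≤ s := by
    intro s t
    rw [hWmem]
    constructor
    · rintro ⟨s', hts', hmem⟩
      rcases eq_or_ne s' s with rfl | hne
      · exact hts'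
      · exact absurd rfl ((hVdisj hne).ne_of_mem hmem (hVmem s))
    · intro h; exact ⟨s, h, hVmem s⟩
  have hchain : ∀ x t t', x ∈ W t → x ∈ W t' → t ≤ t' ∨ t' ≤ t := by
    intro x t t' ht ht'
    obtain ⟨s, hts, hxs⟩ := (hWmem x t).1 ht
    obtain ⟨s', hts', hxs'⟩ := (hWmem x t').1 ht'
    rcases eq_or_ne s s' with rfl | hne
    · exact htree s t t' hts hts'
    · exact absurd rfl ((hVdisj hne).ne_of_mem hxs hxs')
  -- for every x there is a maximum among {t | x ∈ W t} ∪ {⊥}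
  have hmax : ∀ x : X, ∃ m : T, (x ∈ W m ∨ m = ⊥) ∧ ∀ t, x ∈ W t → t ≤ m := by
    intro x
    set s : Finset T := insert ⊥ (Finset.univ.filter fun t => x ∈ W t) with hs
    obtain ⟨m, hm, hmmax⟩ := s.exists_maximal ⟨⊥, Finset.mem_insert_self _ _⟩
    have hmem : ∀ t ∈ s, t = ⊥ ∨ x ∈ W t := by
      intro t ht
      rcases Finset.mem_insert.1 ht with h | h
      · exact Or.inl h
      · exact Or.inr ((Finset.mem_filter.1 h).2)
    refine ⟨m, (hmem m hm).symm, ?_⟩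
    intro t hxt
    have hts : t ∈ s := Finset.mem_insert_of_mem (Finset.mem_filter.2 ⟨Finset.mem_univ _, hxt⟩)
    have hcomp : m ≤ t ∨ t ≤ m := by
      rcases hmem m hm with rfl | hxm
      · exact Or.inl bot_le
      · exact hchain x m t hxm hxt
    rcases hcomp with h | h
    · rcases h.lt_or_eq with hlt | heq
      · exact absurd hlt (not_lt_of_ge (hmmax hts hlt.le))
      · exact heq.ge
    · exact h
  set f : X → T := fun x => (hmax x).choose with hf
  have hfspec : ∀ x, ((x ∈ W (f x) ∨ f x = ⊥) ∧ ∀ t, x ∈ W t → t ≤ f x) :=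
    fun x => (hmax x).choose_spec
  refine ⟨f, ?_, ?_⟩
  · -- continuity
    rw [@continuous_def X T _ (upperTop T)]
    intro O hO
    have hO' : IsUpperSet O := hO
    by_cases hbot : ⊥ ∈ O
    · have : f ⁻¹' O = Set.univ := by
        ext x
        simp only [Set.mem_preimage, Set.mem_univ, iff_true]
        exact hO' bot_le hbot
      rw [this]; exact isOpen_univ
    · have : f ⁻¹' O = ⋃ t ∈ O, W t := by
        ext x
        simp only [Set.mem_preimage, Set.mem_iUnion]
        constructor
        · intro hfx
          refine ⟨f x, hfx, ?_⟩
          rcases (hfspec x).1 with h | h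
          · exact h
          · exact absurd (h ▸ hfx) hbot
        · rintro ⟨t, htO, hxt⟩
          exact hO' ((hfspec x).2 t hxt) htO
      rw [this]
      exact isOpen_biUnion fun t _ => hWopen t
  · -- surjectivity
    intro t
    refine ⟨g t, ?_⟩
    have h1 : g t ∈ W t := (hgW t t).2 le_rfl
    have h2 : t ≤ f (g t) := (hfspec (g t)).2 t h1
    have h3 : f (g t) ≤ t := by
      rcases (hfspec (g t)).1 with h | h
      · exact (hgW t (f (g t))).1 h
      · rw [h]; exact bot_le
    exact le_antisymm h3 h2
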